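/- Let 0 ≤ γ < 1 and let φ : ℝ → ℝ be measurable with ∫_ℝ |φ(r)| dr ≤ A and |φ(r)| ≤ B/|r| for all r ≠ 0, for some constants A, B ≥ 0. Then there exists a constant C, depending only on γ, such that for all λ > 0 and all t > 0: ∫₀^t λ·|φ(λ(t − s))| · s^{−γ} ds ≤ C·(A + B)·t^{−γ}. -/

import Mathlib

open MeasureTheory

/-- Scaling estimate for time mollifiers: if `∫|φ| ≤ A` and `|φ(r)| ≤ B/|r|`, then for
`0 ≤ γ < 1` there is `C = C(γ)` with
`∫₀^t λ |φ(λ(t-s))| s^{-γ} ds ≤ C (A+B) t^{-γ}` for all `λ, t > 0`. -/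
theorem stmt15 (γ : ℝ) (hγ0 : 0 ≤ γ) (hγ1 : γ < 1) :
    ∃ C : ℝ, ∀ (φ : ℝ → ℝ) (A B : ℝ), 0 ≤ A → 0 ≤ B → Measurable φ →
      (∫⁻ r : ℝ, ENNReal.ofReal |φ r|) ≤ ENNReal.ofReal A →
      (∀ r : ℝ, r ≠ 0 → |φ r| ≤ B / |r|) →
      ∀ lam : ℝ, 0 < lam → ∀ t : ℝ, 0 < t →
        (∫⁻ s in Set.Ioc (0:ℝ) t,
            ENNReal.ofReal (lam * |φ (lam * (t - s))| * s ^ (-γ)))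
          ≤ ENNReal.ofReal (C * (A + B) * t ^ (-γ)) := by
  refine ⟨2 / (1 - γ), ?_⟩
  intro φ A B hA hB hφm hφint hφdecay lam hlam t ht
  have h1γ : (0:ℝ) < 1 - γ := by linarith
  have ht2 : (0:ℝ) < t / 2 := by linarith
  -- split the interval
  have hsplit : Set.Ioc (0:ℝ) t = Set.Ioc 0 (t/2) ∪ Set.Ioc (t/2) t :=
    (Set.Ioc_union_Ioc_eq_Ioc ht2.le (by linarith)).symm
  rw [hsplit, lintegral_union measurableSet_Ioc (Set.Ioc_disjoint_Ioc_of_le le_rfl)]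
  -- Part 1 : the near-zero part, using the decay bound |φ(r)| ≤ B/|r|
  have key1 : (∫⁻ s in Set.Ioc (0:ℝ) (t/2),
        ENNReal.ofReal (lam * |φ (lam * (t - s))| * s ^ (-γ)))
      ≤ ENNReal.ofReal ((2*B/t) * ((t/2) ^ (1-γ) / (1-γ))) := by
    have hmono : (∫⁻ s in Set.Ioc (0:ℝ) (t/2),
          ENNReal.ofReal (lam * |φ (lam * (t - s))| * s ^ (-γ)))
        ≤ ∫⁻ s in Set.Ioc (0:ℝ) (t/2), ENNReal.ofReal (2*B/t) * ENNReal.ofReal (s ^ (-γ)) := by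
      refine setLIntegral_mono (by fun_prop) ?_
      intro s hs
      rw [← ENNReal.ofReal_mul (by positivity)]
      apply ENNReal.ofReal_le_ofReal
      have hs0 : 0 < s := hs.1
      have hts : t/2 ≤ t - s := by linarith [hs.2]
      have hts0 : 0 < t - s := lt_of_lt_of_le ht2 hts
      have hne : lam * (t - s) ≠ 0 := by positivity
      have hd := hφdecay _ hne
      rw [abs_of_pos (by positivity : (0:ℝ) < lam * (t - s))] at hd
      have h2 : |φ (lam * (t - s))| ≤ B / (lam * (t/2)) := by
        refine hd.trans ?_
        gcongr
      have hsg : (0:ℝ) ≤ s ^ (-γ) := Real.rpow_nonneg hs0.le _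
      calc lam * |φ (lam * (t - s))| * s ^ (-γ)
          ≤ lam * (B / (lam * (t/2))) * s ^ (-γ) := by gcongr
        _ = (2*B/t) * s ^ (-γ) := by rw [show lam * (B / (lam * (t/2))) = 2*B/t by
              field_simp]
    refine hmono.trans ?_
    rw [lintegral_const_mul' _ _ ENNReal.ofReal_ne_top]
    have hI : (∫⁻ s in Set.Ioc (0:ℝ) (t/2), ENNReal.ofReal (s ^ (-γ)))
        = ENNReal.ofReal ((t/2) ^ (1-γ) / (1-γ)) := by
      have hint : IntegrableOn (fun s : ℝ => s ^ (-γ)) (Set.Ioc 0 (t/2)) volume :=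
        (intervalIntegral.intervalIntegrable_rpow' (by linarith : (-1:ℝ) < -γ)).1
      have hnn : 0 ≤ᵐ[volume.restrict (Set.Ioc (0:ℝ) (t/2))] fun s : ℝ => s ^ (-γ) := by
        filter_upwards [ae_restrict_mem measurableSet_Ioc] with s hs
        exact Real.rpow_nonneg hs.1.le _
      rw [← ofReal_integral_eq_lintegral_ofReal hint hnn]
      congr 1
      rw [← intervalIntegral.integral_of_le ht2.le,
        integral_rpow (Or.inl (by linarith : (-1:ℝ) < -γ))]
      rw [Real.zero_rpow (by linarith : -γ + 1 ≠ 0)]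
      rw [show -γ + 1 = 1 - γ by ring]
      rw [sub_zero]
    rw [hI, ← ENNReal.ofReal_mul (by positivity)]
  -- Part 2 : the bulk part, using the integral bound ∫|φ| ≤ A
  have key2 : (∫⁻ s in Set.Ioc (t/2) t,
        ENNReal.ofReal (lam * |φ (lam * (t - s))| * s ^ (-γ)))
      ≤ ENNReal.ofReal ((t/2) ^ (-γ) * A) := by
    have hmono : (∫⁻ s in Set.Ioc (t/2) t,
          ENNReal.ofReal (lam * |φ (lam * (t - s))| * s ^ (-γ)))
        ≤ ∫⁻ s in Set.Ioc (t/2) t,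
            ENNReal.ofReal ((t/2) ^ (-γ) * lam) * ENNReal.ofReal (|φ (lam * (t - s))|) := by
      refine setLIntegral_mono (by fun_prop) ?_
      intro s hs
      rw [← ENNReal.ofReal_mul (by positivity)]
      apply ENNReal.ofReal_le_ofReal
      have hsg : s ^ (-γ) ≤ (t/2) ^ (-γ) :=
        Real.rpow_le_rpow_of_nonpos ht2 hs.1.le (by linarith)
      calc lam * |φ (lam * (t - s))| * s ^ (-γ)
          ≤ lam * |φ (lam * (t - s))| * (t/2) ^ (-γ) := by
            gcongr
        _ = (t/2) ^ (-γ) * lam * |φ (lam * (t - s))| := by ring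
    refine hmono.trans ?_
    rw [lintegral_const_mul' _ _ ENNReal.ofReal_ne_top]
    have hchg : (∫⁻ s, ENNReal.ofReal (|φ (lam * (t - s))|) ∂volume)
        = ENNReal.ofReal (|lam⁻¹|) * ∫⁻ r, ENNReal.ofReal (|φ r|) ∂volume := by
      have hg : Measurable fun r : ℝ => ENNReal.ofReal (|φ r|) := by fun_prop
      have step1 : (∫⁻ s, ENNReal.ofReal (|φ (lam * (t - s))|) ∂volume)
          = ∫⁻ s, ENNReal.ofReal (|φ (lam * s)|) ∂volume := by
        exact (Measure.measurePreserving_sub_left volume t).lintegral_comp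
          (f := fun s => ENNReal.ofReal (|φ (lam * s)|)) (by fun_prop)
      rw [step1]
      rw [← lintegral_map hg (measurable_const_mul lam),
        Real.map_volume_mul_left (ne_of_gt hlam), lintegral_smul_measure, smul_eq_mul]
    calc ENNReal.ofReal ((t/2) ^ (-γ) * lam)
            * ∫⁻ s in Set.Ioc (t/2) t, ENNReal.ofReal (|φ (lam * (t - s))|)
        ≤ ENNReal.ofReal ((t/2) ^ (-γ) * lam)
            * ∫⁻ s, ENNReal.ofReal (|φ (lam * (t - s))|) ∂volume := by
          gcongr
          exact Measure.restrict_le_self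
      _ = ENNReal.ofReal ((t/2) ^ (-γ) * lam) * (ENNReal.ofReal (|lam⁻¹|)
            * ∫⁻ r, ENNReal.ofReal (|φ r|) ∂volume) := by rw [hchg]
      _ ≤ ENNReal.ofReal ((t/2) ^ (-γ) * lam) * (ENNReal.ofReal (|lam⁻¹|)
            * ENNReal.ofReal A) := by gcongr
      _ = ENNReal.ofReal ((t/2) ^ (-γ) * A) := by
          rw [← ENNReal.ofReal_mul (by positivity), ← ENNReal.ofReal_mul (by positivity)]
          congr 1
          rw [abs_of_pos (by positivity : (0:ℝ) < lam⁻¹)]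
          field_simp
  refine (add_le_add key1 key2).trans ?_
  rw [← ENNReal.ofReal_add (by positivity) (by positivity)]
  apply ENNReal.ofReal_le_ofReal
  -- the remaining purely real inequality
  have hT : (0:ℝ) < t ^ (-γ) := Real.rpow_pos_of_pos ht _
  have hhalf : ∀ z : ℝ, (t/2:ℝ) ^ z = t ^ z * ((2:ℝ) ^ z)⁻¹ := fun z => by
    rw [div_eq_mul_inv, Real.mul_rpow ht.le (by norm_num),
      Real.inv_rpow (by norm_num : (0:ℝ) ≤ 2)]
  have h3 : t ^ (1-γ) = t * t ^ (-γ) := by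
    rw [show (1-γ) = 1 + (-γ) by ring, Real.rpow_add ht, Real.rpow_one]
  have hp1 : (1:ℝ) ≤ (2:ℝ) ^ (1-γ) := Real.one_le_rpow (by norm_num) (by linarith)
  have hp0 : (0:ℝ) < (2:ℝ) ^ (1-γ) := by linarith
  have hr0 : (0:ℝ) < (2:ℝ) ^ (-γ) := Real.rpow_pos_of_pos (by norm_num) _
  have hrq : ((2:ℝ) ^ (-γ))⁻¹ = (2:ℝ) ^ γ := by
    rw [Real.rpow_neg (by norm_num : (0:ℝ) ≤ 2), inv_inv]
  have hq2 : (2:ℝ) ^ γ ≤ 2 := by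
    calc (2:ℝ) ^ γ ≤ (2:ℝ) ^ (1:ℝ) :=
          Real.rpow_le_rpow_of_exponent_le (by norm_num) hγ1.le
      _ = 2 := Real.rpow_one 2
  have hq0 : (0:ℝ) < (2:ℝ) ^ γ := Real.rpow_pos_of_pos (by norm_num) _
  rw [hhalf (1-γ), hhalf (-γ), hrq, h3]
  have e1 : 2*B/t * (t * t ^ (-γ) * ((2:ℝ) ^ (1-γ))⁻¹ / (1-γ))
      = 2*B * t ^ (-γ) * ((2:ℝ) ^ (1-γ))⁻¹ / (1-γ) := by
    field_simp
  rw [e1]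
  have b1 : 2*B * t ^ (-γ) * ((2:ℝ) ^ (1-γ))⁻¹ / (1-γ) ≤ 2*B * t ^ (-γ) / (1-γ) := by
    apply div_le_div_of_nonneg_right ?_ h1γ.le
    calc 2*B * t ^ (-γ) * ((2:ℝ) ^ (1-γ))⁻¹ ≤ 2*B * t ^ (-γ) * 1 := by
          gcongr
          exact inv_le_one_of_one_le₀ hp1
      _ = 2*B * t ^ (-γ) := by ring
  have b2 : t ^ (-γ) * (2:ℝ) ^ γ * A ≤ 2 / (1-γ) * A * t ^ (-γ) := by
    have h2le : (2:ℝ) ≤ 2 / (1-γ) := by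
      rw [le_div_iff₀ h1γ]
      nlinarith
    calc t ^ (-γ) * (2:ℝ) ^ γ * A ≤ t ^ (-γ) * 2 * A := by gcongr
      _ ≤ t ^ (-γ) * (2/(1-γ)) * A := by gcongr
      _ = 2 / (1-γ) * A * t ^ (-γ) := by ring
  calc 2*B * t ^ (-γ) * ((2:ℝ) ^ (1-γ))⁻¹ / (1-γ) + t ^ (-γ) * (2:ℝ) ^ γ * A
      ≤ 2*B * t ^ (-γ) / (1-γ) + 2 / (1-γ) * A * t ^ (-γ) := add_le_add b1 b2
    _ = 2 / (1-γ) * (A + B) * t ^ (-γ) := by field_simp; ring
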